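/- For a monic polynomial P of degree n with distinct real roots x₁,…,x_n and any polynomial Q of degree at most n, the determinant of the full Bezout matrix satisfies det B(P,Q) = (−1)^{n(n−1)/2} · Π_{i=1}^n Q(x_i); in particular det B(P,Q) = 0 if and only if P and Q share a root. -/

import Mathlib

open Polynomial

/-- The quotient polynomial `(P(x)Q(y) - P(y)Q(x))/(x - y)` in `R[y][x]`. -/
noncomputable def bezPoly {R : Type*} [CommRing R] (P Q : R[X]) :
    Polynomial (Polynomial R) :=
  (P.map C * C Q - C P * Q.map C) /ₘ (X - C X)

/-- The `n × n` Bezout matrix: `bezMat n P Q i j` is the coefficient of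
`x^i y^j` in `(P(x)Q(y) - P(y)Q(x))/(x - y)` (`0`-based indexing, so it is
the entry `b_{i+1, j+1}` of the paper). -/
noncomputable def bezMat {R : Type*} [CommRing R] (n : ℕ) (P Q : R[X]) :
    Matrix (Fin n) (Fin n) R :=
  fun i j => ((bezPoly P Q).coeff i).coeff j

lemma bez_mul (P Q : ℝ[X]) :
    (X - C X) * bezPoly P Q = P.map C * C Q - C P * Q.map C := by
  have hdvd : (X - C (X : ℝ[X])) ∣ (P.map C * C Q - C P * Q.map C) := by
    have h := X_sub_C_dvd_sub_C_eval (a := (X : ℝ[X])) (p := P.map C * C Q - C P * Q.map C)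
    simpa [eval_map, eval₂_C_X, mul_comm] using h
  obtain ⟨r, hr⟩ := hdvd
  rw [bezPoly, hr, mul_divByMonic_cancel_left _ (monic_X_sub_C _)]

noncomputable def swapPoly : ℝ[X][X] →+* ℝ[X][X] :=
  eval₂RingHom (mapRingHom (C : ℝ →+* ℝ[X])) (C X)

lemma swapPoly_coeff (p : ℝ[X][X]) (k l : ℕ) :
    ((swapPoly p).coeff k).coeff l = (p.coeff l).coeff k := by
  induction p using Polynomial.induction_on' with
  | add p q hp hq => simp [hp, hq]
  | monomial i q =>
      simp only [swapPoly, coe_eval₂RingHom, eval₂_monomial, coeff_monomial,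
        coe_mapRingHom]
      rw [← C_pow, coeff_mul_C, coeff_map, coeff_C_mul, coeff_X_pow]
      split_ifs with h h2 <;> simp_all [eq_comm]

lemma swapPoly_map_C (p : ℝ[X]) : swapPoly (p.map C) = C p := by
  induction p using Polynomial.induction_on' with
  | add p q hp hq => simp [hp, hq]
  | monomial i r =>
      simp only [swapPoly, map_monomial, coe_eval₂RingHom, eval₂_monomial, coe_mapRingHom,
        map_C]
      rw [← C_pow, ← C_mul, C_mul_X_pow_eq_monomial]

lemma swapPoly_C (p : ℝ[X]) : swapPoly (C p) = p.map C := by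
  simp [swapPoly]

lemma swapPoly_X : swapPoly (X : ℝ[X][X]) = C X := by simp [swapPoly]

lemma swapPoly_bez (P Q : ℝ[X]) : swapPoly (bezPoly P Q) = bezPoly P Q := by
  have h := congrArg swapPoly (bez_mul P Q)
  simp only [map_mul, map_sub, swapPoly_X, swapPoly_C, swapPoly_map_C, map_X] at h
  have h2 : (X - C X) * swapPoly (bezPoly P Q) = (X - C X) * bezPoly P Q := by
    have h3 := bez_mul P Q
    linear_combination -h - h3
  exact mul_left_cancel₀ (X_sub_C_ne_zero X) h2

lemma bez_natDegree_lt (P Q : ℝ[X]) {n : ℕ} (hn : 0 < n)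
    (hP : P.natDegree ≤ n) (hQ : Q.natDegree ≤ n) :
    (bezPoly P Q).natDegree < n := by
  rcases eq_or_ne (bezPoly P Q) 0 with h | h
  · simpa [h]
  have hF : (P.map C * C Q - C P * Q.map C).natDegree ≤ n := by
    have h1 : (P.map C * C Q).natDegree ≤ n :=
      natDegree_mul_le.trans (by simpa [natDegree_C] using
        (natDegree_map_le (f := (C : ℝ →+* ℝ[X])) (p := P)).trans hP)
    have h2 : (C P * Q.map C).natDegree ≤ n :=
      natDegree_mul_le.trans (by simpa [natDegree_C] using
        (natDegree_map_le (f := (C : ℝ →+* ℝ[X])) (p := Q)).trans hQ)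
    exact (natDegree_sub_le _ _).trans (max_le h1 h2)
  rw [← bez_mul P Q] at hF
  rw [natDegree_mul (X_sub_C_ne_zero X) h, natDegree_X_sub_C] at hF
  omega

lemma bez_coeff_natDegree_lt (P Q : ℝ[X]) {n : ℕ} (hn : 0 < n)
    (hP : P.natDegree ≤ n) (hQ : Q.natDegree ≤ n) (k : ℕ) :
    ((bezPoly P Q).coeff k).natDegree < n := by
  by_contra hle
  push_neg at hle
  rcases eq_or_ne ((bezPoly P Q).coeff k) 0 with h | h
  · simp [h] at hle; omega
  have := swapPoly_coeff (bezPoly P Q) k ((bezPoly P Q).coeff k).natDegree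
  rw [swapPoly_bez] at this
  have hz : (bezPoly P Q).coeff (((bezPoly P Q).coeff k).natDegree) = 0 :=
    coeff_eq_zero_of_natDegree_lt (lt_of_lt_of_le (bez_natDegree_lt P Q hn hP hQ) hle)
  rw [hz] at this
  simp at this
  exact h this

lemma bez_eval_eval (P Q : ℝ[X]) (a b : ℝ) :
    (a - b) * (((bezPoly P Q).eval (C a)).eval b)
      = P.eval a * Q.eval b - P.eval b * Q.eval a := by
  have h := congrArg (fun p : ℝ[X][X] => ((p.eval (C a)).eval b)) (bez_mul P Q)
  simp only [eval_mul, eval_sub, eval_X, eval_C, eval_map, eval₂_at_apply] at h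
  linear_combination h

lemma bez_eval_diag {n : ℕ} (x : Fin n → ℝ) (Q : ℝ[X]) (i : Fin n) :
    (((bezPoly (∏ j, (X - C (x j))) Q).eval (C (x i))).eval (x i))
      = (∏ j ∈ Finset.univ.erase i, (x i - x j)) * Q.eval (x i) := by
  set P := ∏ j, (X - C (x j)) with hPdef
  have hPa : P.eval (x i) = 0 := by
    rw [hPdef, eval_prod]
    exact Finset.prod_eq_zero (Finset.mem_univ i) (by simp)
  have h := congrArg (fun p : ℝ[X][X] => p.eval (C (x i))) (bez_mul P Q)
  simp only [eval_mul, eval_sub, eval_X, eval_C, eval_map, eval₂_at_apply, hPa, map_zero,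
    zero_mul, zero_sub] at h
  have hfac : P = (X - C (x i)) * ∏ j ∈ Finset.univ.erase i, (X - C (x j)) :=
    (Finset.mul_prod_erase _ _ (Finset.mem_univ i)).symm
  have hne : (C (x i) - X : ℝ[X]) ≠ 0 := by
    rw [← neg_sub]
    exact neg_ne_zero.mpr (X_sub_C_ne_zero (x i))
  have hG : (bezPoly P Q).eval (C (x i))
      = (∏ j ∈ Finset.univ.erase i, (X - C (x j))) * C (Q.eval (x i)) := by
    refine mul_left_cancel₀ hne ?_
    rw [h, hfac]; ring
  rw [hG, eval_mul, eval_C, eval_prod]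
  simp

lemma eval_eval_eq_sum {n : ℕ} (p : ℝ[X][X]) (hp : p.natDegree < n)
    (hc : ∀ k, (p.coeff k).natDegree < n) (a b : ℝ) :
    (p.eval (C a)).eval b
      = ∑ k ∈ Finset.range n, ∑ l ∈ Finset.range n, ((p.coeff k).coeff l) * a ^ k * b ^ l := by
  rw [eval_eq_sum_range' hp, eval_finset_sum]
  refine Finset.sum_congr rfl fun k _ => ?_
  rw [eval_mul, eval_pow, eval_C, eval_eq_sum_range' (hc k), Finset.sum_mul]
  refine Finset.sum_congr rfl fun l _ => ?_
  ring

lemma prod_pairs (n : ℕ) (x : Fin n → ℝ) :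
    ∏ i, ∏ j ∈ Finset.univ.erase i, (x i - x j)
      = (-1) ^ (n * (n - 1) / 2) * (Matrix.vandermonde x).det ^ 2 := by
  have h := Finset.prod_prod_Ioi_mul_eq_prod_prod_off_diag (f := fun a b => x b - x a)
  have herase : ∀ i : Fin n, ({i}ᶜ : Finset (Fin n)) = Finset.univ.erase i := by
    intro i; rw [Finset.compl_eq_univ_sdiff, Finset.erase_eq]
  have h2 : (∏ i, ∏ j ∈ Finset.univ.erase i, (x i - x j))
      = ∏ i, ∏ j ∈ Finset.Ioi i, ((x i - x j) * (x j - x i)) :=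
    calc (∏ i, ∏ j ∈ Finset.univ.erase i, (x i - x j))
        = ∏ i, ∏ j ∈ ({i}ᶜ : Finset (Fin n)), (x i - x j) :=
          Finset.prod_congr rfl fun i _ => Finset.prod_congr (herase i).symm fun _ _ => rfl
      _ = ∏ i, ∏ j ∈ Finset.Ioi i, ((x i - x j) * (x j - x i)) := by
          convert h.symm using 3
  have h3 : ∀ i : Fin n, ∏ j ∈ Finset.Ioi i, ((x i - x j) * (x j - x i))
      = (-1 : ℝ) ^ (n - 1 - (i : ℕ)) * ∏ j ∈ Finset.Ioi i, (x j - x i) ^ 2 := by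
    intro i
    calc ∏ j ∈ Finset.Ioi i, ((x i - x j) * (x j - x i))
        = ∏ j ∈ Finset.Ioi i, ((-1 : ℝ) * (x j - x i) ^ 2) :=
          Finset.prod_congr rfl fun j _ => by ring
      _ = (-1 : ℝ) ^ (Finset.Ioi i).card * ∏ j ∈ Finset.Ioi i, (x j - x i) ^ 2 := by
          rw [Finset.prod_mul_distrib, Finset.prod_const]
      _ = (-1 : ℝ) ^ (n - 1 - (i : ℕ)) * ∏ j ∈ Finset.Ioi i, (x j - x i) ^ 2 := by
          rw [Fin.card_Ioi]
  rw [h2]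
  simp only [h3]
  rw [Finset.prod_mul_distrib]
  congr 1
  · rw [Finset.prod_pow_eq_pow_sum]
    congr 1
    rw [Fin.sum_univ_eq_sum_range (fun k => n - 1 - k) n,
      Finset.sum_range_reflect (fun k => k) n, Finset.sum_range_id]
  · rw [Matrix.det_vandermonde, ← Finset.prod_pow]
    exact Finset.prod_congr rfl fun i _ => Finset.prod_pow _ _ _

/-- For a monic `P` of degree `n` with distinct real roots `x₁,…,x_n` and `Q`
of degree at most `n`,
`det B(P,Q) = (-1)^{n(n-1)/2} Π_i Q(x_i)`; in particular `det B(P,Q) = 0` iff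
`P` and `Q` share a root. -/
theorem bezMat_det (n : ℕ) (x : Fin n → ℝ) (hx : Function.Injective x)
    (P Q : ℝ[X]) (hP : P = ∏ i, (X - C (x i))) (hQ : Q.degree ≤ n) :
    (bezMat n P Q).det = (-1) ^ (n * (n - 1) / 2) * ∏ i, Q.eval (x i) ∧
      ((bezMat n P Q).det = 0 ↔ ∃ z : ℝ, P.eval z = 0 ∧ Q.eval z = 0) := by
  have key : (bezMat n P Q).det = (-1) ^ (n * (n - 1) / 2) * ∏ i, Q.eval (x i) := by
    rcases Nat.eq_zero_or_pos n with hn | hn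
    · subst hn
      simp [Matrix.det_isEmpty]
    have hPdeg : P.natDegree = n := by
      rw [hP, natDegree_prod _ _ fun i _ => X_sub_C_ne_zero (x i)]
      simp [natDegree_X_sub_C]
    have hQdeg : Q.natDegree ≤ n := natDegree_le_iff_degree_le.mpr hQ
    have hb1 := bez_natDegree_lt P Q hn hPdeg.le hQdeg
    have hb2 := bez_coeff_natDegree_lt P Q hn hPdeg.le hQdeg
    set V : Matrix (Fin n) (Fin n) ℝ := Matrix.of (fun k i => x i ^ (k : ℕ)) with hVdef
    have hMV : V.transpose * bezMat n P Q * V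
        = Matrix.diagonal
            (fun i => (∏ j ∈ Finset.univ.erase i, (x i - x j)) * Q.eval (x i)) := by
      ext i j
      have hentry : (V.transpose * bezMat n P Q * V) i j
          = (((bezPoly P Q).eval (C (x i))).eval (x j)) := by
        rw [eval_eval_eq_sum _ hb1 hb2]
        calc (V.transpose * bezMat n P Q * V) i j
            = ∑ k : Fin n, ∑ l : Fin n,
                ((bezPoly P Q).coeff (k : ℕ)).coeff (l : ℕ) * x i ^ (k : ℕ) * x j ^ (l : ℕ) := by
              simp only [Matrix.mul_apply, Matrix.transpose_apply, Matrix.of_apply, bezMat,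
                hVdef, Finset.sum_mul]
              rw [Finset.sum_comm]
              exact Finset.sum_congr rfl fun k _ => Finset.sum_congr rfl fun l _ => by ring
          _ = ∑ k ∈ Finset.range n, ∑ l ∈ Finset.range n,
                ((bezPoly P Q).coeff k).coeff l * x i ^ k * x j ^ l := by
              rw [Fin.sum_univ_eq_sum_range (fun k => ∑ l : Fin n,
                ((bezPoly P Q).coeff k).coeff (l : ℕ) * x i ^ k * x j ^ (l : ℕ)) n]
              exact Finset.sum_congr rfl fun k _ => Fin.sum_univ_eq_sum_range
                (fun l => ((bezPoly P Q).coeff k).coeff l * x i ^ k * x j ^ l) n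
      rcases eq_or_ne i j with rfl | hij
      · rw [Matrix.diagonal_apply_eq, hentry, hP]
        exact bez_eval_diag x Q i
      · rw [Matrix.diagonal_apply_ne _ hij, hentry]
        have h := bez_eval_eval P Q (x i) (x j)
        have hxi : P.eval (x i) = 0 := by
          rw [hP, eval_prod]
          exact Finset.prod_eq_zero (Finset.mem_univ i) (by simp)
        have hxj : P.eval (x j) = 0 := by
          rw [hP, eval_prod]
          exact Finset.prod_eq_zero (Finset.mem_univ j) (by simp)
        have hne : x i - x j ≠ 0 := sub_ne_zero.mpr fun hh => hij (hx hh)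
        have h0 : (x i - x j) * (((bezPoly P Q).eval (C (x i))).eval (x j)) = 0 := by
          rw [h, hxi, hxj]; ring
        exact (mul_eq_zero.mp h0).resolve_left hne
    have hdet := congrArg Matrix.det hMV
    rw [Matrix.det_mul, Matrix.det_mul, Matrix.det_transpose, Matrix.det_diagonal] at hdet
    have hVT : V = (Matrix.vandermonde x).transpose := by
      ext k i
      simp [hVdef, Matrix.vandermonde]
    have hVd : V.det = (Matrix.vandermonde x).det := by
      rw [hVT, Matrix.det_transpose]
    have hVne : (Matrix.vandermonde x).det ≠ 0 := Matrix.det_vandermonde_ne_zero_iff.mpr hx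
    have hfin : (Matrix.vandermonde x).det ^ 2 * (bezMat n P Q).det
        = (Matrix.vandermonde x).det ^ 2
            * ((-1) ^ (n * (n - 1) / 2) * ∏ i, Q.eval (x i)) :=
      calc (Matrix.vandermonde x).det ^ 2 * (bezMat n P Q).det
          = V.det * (bezMat n P Q).det * V.det := by rw [hVd]; ring
        _ = ∏ i, ((∏ j ∈ Finset.univ.erase i, (x i - x j)) * Q.eval (x i)) := hdet
        _ = (∏ i, ∏ j ∈ Finset.univ.erase i, (x i - x j)) * ∏ i, Q.eval (x i) :=
            Finset.prod_mul_distrib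
        _ = (Matrix.vandermonde x).det ^ 2
              * ((-1) ^ (n * (n - 1) / 2) * ∏ i, Q.eval (x i)) := by
            rw [prod_pairs]; ring
    exact mul_left_cancel₀ (pow_ne_zero 2 hVne) hfin
  refine ⟨key, ?_⟩
  rw [key]
  constructor
  · intro h0
    have hprod : ∏ i, Q.eval (x i) = 0 := by
      rcases mul_eq_zero.mp h0 with h | h
      · exact absurd h (pow_ne_zero _ (by norm_num))
      · exact h
    obtain ⟨i, -, hi⟩ := Finset.prod_eq_zero_iff.mp hprod
    refine ⟨x i, ?_, hi⟩
    rw [hP, eval_prod]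
    exact Finset.prod_eq_zero (Finset.mem_univ i) (by simp)
  · rintro ⟨z, hz1, hz2⟩
    rw [hP, eval_prod] at hz1
    obtain ⟨i, -, hi⟩ := Finset.prod_eq_zero_iff.mp hz1
    simp only [eval_sub, eval_X, eval_C, sub_eq_zero] at hi
    rw [mul_eq_zero]
    right
    refine Finset.prod_eq_zero (Finset.mem_univ i) ?_
    rw [← hi]; exact hz2
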